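/- arXiv:1706.08447 — 3 statements merged into one kernel-verified Lean document; each statement's English description precedes it below -/
import Mathlib

section
/- Let F_q be a finite field of characteristic p and let f ∈ F_q[X] with nonzero formal derivative (i.e. f ∉ F_q[X^p]) and deg(f) ≥ 8. If f is universal, then f is indecomposable: there do not exist polynomials g, h ∈ F_q[X], each of degree strictly greater than 1 and strictly less than deg(f), such that f = g ∘ h (composition of polynomials). -/
open Polynomial

/-- `f ∈ F_q[X]` is `d`-universal if for every positive `ℓ ≤ deg f` there is
`t₀ ∈ F_{q^d}` such that `f - t₀` has an irreducible factor of degree `ℓ` over `F_{q^d}`. -/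
def IsDUniversal {F : Type} [Field F] [Fintype F] (f : Polynomial F) (d : ℕ) : Prop :=
  ∀ (K : Type) [Field K] [Fintype K] [Algebra F K],
    Fintype.card K = Fintype.card F ^ d →
    ∀ ℓ : ℕ, 0 < ℓ → ℓ ≤ f.natDegree →
      ∃ t₀ : K, ∃ g : Polynomial K,
        Irreducible g ∧ g.natDegree = ℓ ∧ g ∣ (f.map (algebraMap F K) - C t₀)

/-- `f` is universal if it is `d`-universal for some positive integer `d`. -/
def IsUniversal {F : Type} [Field F] [Fintype F] (f : Polynomial F) : Prop :=
  ∃ d : ℕ, 0 < d ∧ IsDUniversal f d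

/-- There is a finite field extension of `F` of cardinality `card F ^ d`. -/
lemma exists_ext (F : Type) [Field F] [Fintype F] (d : ℕ) (hd : 0 < d) :
    ∃ (K : Type) (_ : Field K) (_ : Fintype K) (_ : Algebra F K),
      Fintype.card K = Fintype.card F ^ d := by
  classical
  set p := ringChar F with hp
  haveI : CharP F p := ringChar.charP F
  obtain ⟨a, hpp, hcardF⟩ := FiniteField.card F p
  haveI : Fact p.Prime := ⟨hpp⟩
  set q := Fintype.card F with hq
  have hq1 : 1 < q := Fintype.one_lt_card
  have hqd1 : 1 < q ^ d := Nat.one_lt_pow hd.ne' hq1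
  set gp : F[X] := X ^ q ^ d - X with hgp
  set K := gp.SplittingField with hK
  haveI : Finite K := Module.finite_of_finite F
  haveI : Fintype K := Fintype.ofFinite K
  haveI : CharP K p := charP_of_injective_algebraMap (algebraMap F K).injective p
  haveI : ExpChar K p := ExpChar.prime hpp
  refine ⟨K, inferInstance, inferInstance, inferInstance, ?_⟩
  have hdeg : gp.natDegree = q ^ d := FiniteField.X_pow_card_sub_X_natDegree_eq F hqd1
  have hgpne : gp ≠ 0 := by
    intro h0
    have := hdeg
    rw [h0, natDegree_zero] at this
    omega
  have hpq : p ∣ q ^ d := dvd_pow (hcardF ▸ dvd_pow_self p a.pos.ne') hd.ne'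
  have hsep : gp.Separable := galois_poly_separable p (q ^ d) hpq
  have hcardroots : Fintype.card (gp.rootSet K) = q ^ d := by
    rw [card_rootSet_eq_natDegree hsep (SplittingField.splits gp), hdeg]
  -- every element of K is a root of gp
  have hm : q ^ d = p ^ (a * d) := by rw [hcardF, pow_mul]
  have hall : ∀ x : K, x ^ q ^ d = x := by
    intro x
    have hx : x ∈ Subring.closure (Set.range (algebraMap F K) ∪ gp.rootSet K) := by
      have : x ∈ Algebra.adjoin F (gp.rootSet K) := by
        rw [SplittingField.adjoin_rootSet]; trivial
      rwa [Algebra.mem_adjoin_iff] at this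
    have hsub : Subring.closure (Set.range (algebraMap F K) ∪ gp.rootSet K) ≤
        RingHom.eqLocus (iterateFrobenius K p (a * d)) (RingHom.id K) := by
      rw [Subring.closure_le]
      rintro y (⟨r, rfl⟩ | hy)
      · show iterateFrobenius K p (a * d) _ = _
        rw [iterateFrobenius_def, ← map_pow, ← hm, FiniteField.pow_card_pow]
        rfl
      · show iterateFrobenius K p (a * d) y = y
        rw [mem_rootSet_of_ne hgpne] at hy
        simp only [hgp, map_sub, map_pow, aeval_X, sub_eq_zero] at hy
        show iterateFrobenius K p (a * d) y = y
        rw [iterateFrobenius_def, ← hm, hy]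
    have := hsub hx
    have h2 : iterateFrobenius K p (a * d) x = x := this
    rwa [iterateFrobenius_def, ← hm] at h2
  have hset : gp.rootSet K = Set.univ := by
    apply Set.eq_univ_of_forall
    intro x
    rw [mem_rootSet_of_ne hgpne]
    simp only [hgp, map_sub, map_pow, aeval_X, sub_eq_zero]
    exact hall x
  have e1 : Nat.card (gp.rootSet K) = q ^ d := by
    rw [Nat.card_eq_fintype_card]; exact hcardroots
  rw [hset, Nat.card_univ, Nat.card_eq_fintype_card] at e1
  exact e1

/-- **Corollary 3.5.** A universal polynomial (separable, of degree `≥ 8`) is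
indecomposable: it is not a composition of two polynomials of strictly smaller degree
(each of degree `> 1`). -/
theorem stmt_3 (F : Type) [Field F] [Fintype F] (f : Polynomial F)
    (hf : f.derivative ≠ 0) (hn : 8 ≤ f.natDegree) (huniv : IsUniversal f) :
    ¬ ∃ g h : Polynomial F,
        1 < g.natDegree ∧ g.natDegree < f.natDegree ∧
        1 < h.natDegree ∧ h.natDegree < f.natDegree ∧
        f = g.comp h := by
  classical
  obtain ⟨d, hd, hD⟩ := huniv
  rintro ⟨g, h, hg1, hgn, hh1, hhn, hfgh⟩
  set n := f.natDegree with hnn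
  have hmul : n = g.natDegree * h.natDegree := by rw [hnn, hfgh, natDegree_comp]
  -- a prime strictly between n/2 and n
  obtain ⟨ℓ, hℓp, hℓ1, hℓ2⟩ := Nat.exists_prime_lt_and_le_two_mul (n / 2) (by omega)
  have hℓn : ℓ ≤ n := le_trans hℓ2 (by omega)
  have h2ℓ : n < 2 * ℓ := by omega
  have hgℓ : g.natDegree < ℓ := by
    have h2g : g.natDegree * 2 ≤ g.natDegree * h.natDegree := Nat.mul_le_mul_left _ hh1
    rw [← hmul] at h2g; omega
  have hhℓ : h.natDegree < ℓ := by
    have h2h : 2 * h.natDegree ≤ g.natDegree * h.natDegree := Nat.mul_le_mul_right _ hg1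
    rw [← hmul] at h2h; omega
  -- get the extension field
  obtain ⟨K, _, _, _, hcard⟩ := exists_ext F d hd
  obtain ⟨t₀, P, hPirr, hPdeg, hPdvd⟩ := hD K hcard ℓ hℓp.pos hℓn
  haveI : Fact (Irreducible P) := ⟨hPirr⟩
  set φ := algebraMap F K with hφ
  set L := AdjoinRoot P with hL
  have hPne : P ≠ 0 := hPirr.ne_zero
  set pb := AdjoinRoot.powerBasis hPne with hpb
  haveI : FiniteDimensional K L := pb.finite
  have hfinrank : Module.finrank K L = ℓ := by
    rw [pb.finrank, hpb, AdjoinRoot.powerBasis_dim, hPdeg]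
  set x : L := AdjoinRoot.root P with hx
  have hev : aeval x (f.map φ) = algebraMap K L t₀ := by
    rw [hx, AdjoinRoot.aeval_eq, AdjoinRoot.algebraMap_eq, ← AdjoinRoot.mk_C,
      ← sub_eq_zero, ← map_sub, AdjoinRoot.mk_eq_zero]
    exact hPdvd
  set β : L := aeval x (h.map φ) with hβdef
  have hβ : aeval β (g.map φ - C t₀) = 0 := by
    rw [map_sub, aeval_C]
    show aeval (aeval x (h.map φ)) (g.map φ) - algebraMap K L t₀ = 0
    rw [sub_eq_zero, ← aeval_comp, ← map_comp, ← hfgh]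
    exact hev
  have hint : IsIntegral K β := IsIntegral.of_finite K β
  have hdvd1 : minpoly K β ∣ (g.map φ - C t₀) := minpoly.dvd K β hβ
  have hg0 : (g.map φ - C t₀).natDegree = g.natDegree := by
    rw [natDegree_sub_C, natDegree_map]
  have hne1 : (g.map φ - C t₀) ≠ 0 := by
    intro h0; rw [h0, natDegree_zero] at hg0; omega
  have hle1 : (minpoly K β).natDegree ≤ g.natDegree :=
    hg0 ▸ natDegree_le_of_dvd hdvd1 hne1
  have hdvdℓ : (minpoly K β).natDegree ∣ ℓ := hfinrank ▸ minpoly.degree_dvd hint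
  rcases hℓp.eq_one_or_self_of_dvd _ hdvdℓ with h1 | hℓeq
  · -- β is in K
    obtain ⟨b, hb⟩ := minpoly.natDegree_eq_one_iff.mp h1
    have hxroot : aeval x (h.map φ - C b) = 0 := by
      rw [map_sub, aeval_C, sub_eq_zero, ← hβdef, hb]
    have hdvd2 : minpoly K x ∣ (h.map φ - C b) := minpoly.dvd K x hxroot
    have hh0 : (h.map φ - C b).natDegree = h.natDegree := by
      rw [natDegree_sub_C, natDegree_map]
    have hne2 : (h.map φ - C b) ≠ 0 := by
      intro h0; rw [h0, natDegree_zero] at hh0; omega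
    have hminx : (minpoly K x).natDegree = ℓ := by
      rw [hx, AdjoinRoot.minpoly_root hPne, natDegree_mul hPne, natDegree_C, add_zero, hPdeg]
      · simpa using inv_ne_zero (leadingCoeff_ne_zero.mpr hPne)
    have := hminx ▸ natDegree_le_of_dvd hdvd2 hne2
    omega
  · omega
end

section
/- Let n be a positive integer and let G be a subgroup of the symmetric group S_n acting on a set U of n elements. Suppose that G acts transitively on U and that G contains a permutation which is a cycle of prime order r with r > n/2. Then G acts primitively on U, i.e. G preserves no nontrivial partition of U (every G-invariant block of the action is a singleton or all of U). -/
open Pointwise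

/-- **Lemma 2.5.** Let `G ≤ S_n` act transitively on a set `U` of `n` elements and
suppose `G` contains a cycle of prime order `r` with `r > n/2`. Then `G` acts primitively
on `U`: every `G`-block is a subsingleton (empty or a singleton) or all of `U`. -/
theorem stmt_9 (n r : ℕ) (hn : 0 < n)
    (U : Type) [Fintype U] [DecidableEq U] (hU : Fintype.card U = n)
    (G : Subgroup (Equiv.Perm U))
    (htrans : MulAction.IsPretransitive G U)
    (hr : r.Prime) (hrn : n < 2 * r)
    (hcycle : ∃ σ : Equiv.Perm U, σ ∈ G ∧ σ.IsCycle ∧ orderOf σ = r) :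
    ∀ B : Set U, MulAction.IsBlock G B → B.Subsingleton ∨ B = Set.univ := by
  intro B hB
  by_cases hBs : B.Subsingleton
  · exact Or.inl hBs
  right
  obtain ⟨σ, hσG, hσcyc, hσord⟩ := hcycle
  set s : G := ⟨σ, hσG⟩ with hs
  have hords : orderOf s = r := by
    rw [← hσord]
    exact (orderOf_injective G.subtype G.subtype_injective s).symm
  -- a point moved by σ
  obtain ⟨x, hx, hcyc⟩ := hσcyc
  -- two distinct points of B
  rw [Set.not_subsingleton_iff] at hBs
  obtain ⟨a, ha, b, hb, hab⟩ := hBs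
  obtain ⟨g, hg⟩ := htrans.exists_smul_eq a x
  set B' : Set U := g • B with hB'def
  have hB' : MulAction.IsBlock G B' := hB.translate g
  have hxB' : x ∈ B' := ⟨a, ha, hg⟩
  have ha' : g • a ∈ B' := ⟨a, ha, rfl⟩
  have hb' : g • b ∈ B' := ⟨b, hb, rfl⟩
  have hab' : g • a ≠ g • b := fun h => hab (smul_left_cancel g h)
  -- s stabilizes B'
  have hsT : s • B' = B' := by
    by_contra hsT
    -- distinct powers give distinct blocks
    have key : ∀ k l : ℕ, k < l → l < r → s ^ k • B' ≠ s ^ l • B' := by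
      intro k l hkl hlr heq
      apply hsT
      have hd : s ^ (l - k) • B' = B' := by
        have h1 : s ^ l = s ^ k * s ^ (l - k) := by
          rw [← pow_add]; congr 1; omega
        rw [h1, mul_smul] at heq
        exact (smul_left_cancel _ heq).symm
      set d := l - k with hdd
      have hd0 : 0 < d := by omega
      have hdr : d < r := by omega
      have hcop : Nat.Coprime d r :=
        (hr.coprime_iff_not_dvd.mpr (Nat.not_dvd_of_pos_of_lt hd0 hdr)).symm
      obtain ⟨m, -, hm⟩ := Nat.exists_mul_mod_eq_one_of_coprime hcop hr.one_lt
      have hsm : s = (s ^ d) ^ m := by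
        rw [← pow_mul]
        conv_lhs => rw [← pow_one s, ← hm, ← hords, pow_mod_orderOf]
      have hpow : ∀ j : ℕ, (s ^ d) ^ j • B' = B' := by
        intro j
        induction j with
        | zero => simp
        | succ j ih => rw [pow_succ, mul_smul, hd, ih]
      rw [hsm]
      exact hpow m
    have hne : ∀ k l : Fin r, k ≠ l → Disjoint (s ^ (k : ℕ) • B') (s ^ (l : ℕ) • B') := by
      intro k l hkl
      apply hB'
      rcases lt_or_gt_of_ne (fun h : (k : ℕ) = (l : ℕ) => hkl (Fin.ext h)) with h | h
      · exact key _ _ h l.isLt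
      · exact fun he => key _ _ h k.isLt he.symm
    -- injection Fin r × Fin 2 → U
    have hrpos : 0 < r := hr.pos
    let F : Fin r × Fin 2 → U := fun p =>
      s ^ (p.1 : ℕ) • (if p.2 = 0 then g • a else g • b)
    have hFmem : ∀ p : Fin r × Fin 2, F p ∈ s ^ (p.1 : ℕ) • B' := by
      rintro ⟨k, i⟩
      apply Set.smul_mem_smul_set
      dsimp only
      split <;> assumption
    have hFinj : Function.Injective F := by
      rintro ⟨k, i⟩ ⟨l, j⟩ hFe
      have hk : k = l := by
        by_contra hkl
        exact (hne k l hkl).ne_of_mem (hFmem ⟨k, i⟩) (hFmem ⟨l, j⟩) hFe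
      subst hk
      have hij : i = j := by
        by_contra hij
        have : (if i = 0 then g • a else g • b) = (if j = 0 then g • a else g • b) :=
          smul_left_cancel _ hFe
        fin_cases i <;> fin_cases j <;> simp_all
      rw [hij]
    have := Fintype.card_le_of_injective F hFinj
    simp [hU] at this
    omega
  -- support of σ is contained in B'
  have hstab : ∀ i : ℤ, s ^ i • B' = B' := by
    intro i
    have hsmem : s ∈ MulAction.stabilizer G B' := hsT
    exact zpow_mem hsmem i
  have hsupp : (σ.support : Set U) ⊆ B' := by
    intro y hy
    have hy' : σ y ≠ y := by simpa using hy
    obtain ⟨i, hi⟩ := hcyc hy'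
    have : (s ^ i) • x = y := by
      have : ((s ^ i : G) : Equiv.Perm U) = σ ^ i := by
        push_cast; rfl
      show ((s ^ i : G) : Equiv.Perm U) x = y
      rw [this]; exact hi
    rw [← this, ← hstab i]
    exact Set.smul_mem_smul_set hxB'
  -- count
  have hcard : σ.support.card = r := by rw [← hσord]; exact (show σ.IsCycle from ⟨x, hx, hcyc⟩).orderOf.symm
  have hrB' : r ≤ B'.ncard := by
    calc r = (σ.support : Set U).ncard := by rw [Set.ncard_coe_finset, hcard]
    _ ≤ B'.ncard := Set.ncard_le_ncard hsupp (Set.toFinite B')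
  have hBB' : B'.ncard = B.ncard := Set.ncard_smul_set g B
  apply hB.eq_univ_of_card_lt
  have : Nat.card U = n := by rw [Nat.card_eq_fintype_card, hU]
  rw [this]
  omega
end

section
/- Let q be a power of an odd prime, let K = F_q(x) be the rational function field over F_q in the variable x, and set t = x^q + x^2 ∈ K. Let L be the splitting field over K of the polynomial Y^{q−1} + Y + 2x ∈ K[Y]. Then the polynomial X^q + X^2 − t ∈ K[X] splits completely into linear factors over L. In particular, L is the splitting field of X^q + X^2 − t over F_q(t). -/
set_option maxHeartbeats 1000000


open Polynomial
open scoped IntermediateField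

/-- **Splitting field description in Proposition 4.2.** Let `q` be a power of an odd
prime, `K = F_q(x)`, `t = x^q + x^2 ∈ K`, and let `L` be the splitting field of
`Y^(q-1) + Y + 2x` over `K`. Then `X^q + X^2 - t` splits completely over `L`; in
particular `L` is the splitting field of `X^q + X^2 - t` over `F_q(t)`. -/
theorem stmt_11 (p a : ℕ) [Fact p.Prime] (hodd : Odd p) (ha : 0 < a)
    (F : Type) [Field F] [Fintype F] (hF : Fintype.card F = p ^ a) :
    Polynomial.Splits
      (Polynomial.map
        (algebraMap (RatFunc F)
          ((X ^ (p ^ a - 1) + X + C (2 * RatFunc.X) : Polynomial (RatFunc F)).SplittingField))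
        (X ^ p ^ a + X ^ 2 - C (RatFunc.X ^ p ^ a + RatFunc.X ^ 2))) ∧
    (letI : Algebra (↥F⟮(RatFunc.X ^ p ^ a + RatFunc.X ^ 2 : RatFunc F)⟯)
        ((X ^ (p ^ a - 1) + X + C (2 * RatFunc.X) : Polynomial (RatFunc F)).SplittingField) :=
      ((algebraMap (RatFunc F)
          ((X ^ (p ^ a - 1) + X + C (2 * RatFunc.X) :
            Polynomial (RatFunc F)).SplittingField)).comp
        (algebraMap (↥F⟮(RatFunc.X ^ p ^ a + RatFunc.X ^ 2 : RatFunc F)⟯)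
          (RatFunc F))).toAlgebra
    Polynomial.IsSplittingField (↥F⟮(RatFunc.X ^ p ^ a + RatFunc.X ^ 2 : RatFunc F)⟯)
      ((X ^ (p ^ a - 1) + X + C (2 * RatFunc.X) : Polynomial (RatFunc F)).SplittingField)
      (X ^ p ^ a + X ^ 2 -
        C (⟨RatFunc.X ^ p ^ a + RatFunc.X ^ 2,
            IntermediateField.mem_adjoin_simple_self F
              (RatFunc.X ^ p ^ a + RatFunc.X ^ 2)⟩ :
          ↥F⟮(RatFunc.X ^ p ^ a + RatFunc.X ^ 2 : RatFunc F)⟯))) := by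
  have hp : p.Prime := Fact.out
  set q : ℕ := p ^ a with hq
  set K := RatFunc F with hK
  set g : K[X] := X ^ (q - 1) + X + C (2 * RatFunc.X) with hg
  set L := g.SplittingField with hL
  set t : K := RatFunc.X ^ q + RatFunc.X ^ 2 with ht
  -- characteristic facts
  haveI hcharF : CharP F p := by
    obtain ⟨c, hc⟩ := CharP.exists F
    haveI := hc
    obtain ⟨n, hcp, hcard⟩ := FiniteField.card F c
    have hdvd : p ∣ c ^ (n : ℕ) := by
      rw [← hcard, hF]; exact dvd_pow_self p ha.ne'
    have : c = p :=
      ((Nat.prime_dvd_prime_iff_eq hp hcp).mp (hp.dvd_of_dvd_pow hdvd)).symm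
    rwa [this] at hc
  haveI hcharK : CharP K p :=
    charP_of_injective_algebraMap (algebraMap F K).injective p
  haveI hcharKX : CharP K[X] p :=
    charP_of_injective_ringHom (Polynomial.C_injective (R := K)) p
  have hq1 : q - 1 + 1 = q := Nat.succ_pred_eq_of_pos (pow_pos hp.pos a)
  have hq3 : 3 ≤ q := by
    have hp2 : p ≠ 2 := by
      rintro rfl
      exact (by decide : ¬ Odd 2) hodd
    have hp3 : 3 ≤ p := by
      have := hp.two_le
      omega
    calc 3 ≤ p := hp3
    _ ≤ p ^ a := Nat.le_self_pow ha.ne' p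
  -- the key factorization identity over K
  have key : (X ^ q + X ^ 2 - C t : K[X])
      = (X - C RatFunc.X) * (g.comp (X - C RatFunc.X)) := by
    have hcomp : g.comp (X - C (RatFunc.X : K)) =
        (X - C RatFunc.X) ^ (q - 1) + (X - C RatFunc.X) + C (2 * RatFunc.X) := by
      simp [hg]
    have hpow : ((X : K[X]) - C RatFunc.X) * (X - C RatFunc.X) ^ (q - 1)
        = (X - C RatFunc.X) ^ q := by
      rw [← pow_succ', hq1]
    have h1 : ((X : K[X]) - C RatFunc.X) ^ q = X ^ q - (C RatFunc.X) ^ q := by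
      rw [hq]; exact sub_pow_char_pow _ _ a
    rw [hcomp, mul_add, mul_add, hpow, h1, ht]
    rw [map_add, C_pow, C_pow, map_mul]
    rw [(map_ofNat C 2 : (C 2 : K[X]) = 2)]
    ring
  -- splits over L
  have hgsplits : (g.map (algebraMap K L)).Splits := SplittingField.splits g
  have hs1 : ((X ^ q + X ^ 2 - C t : K[X]).map (algebraMap K L)).Splits := by
    rw [key, Polynomial.map_mul, Polynomial.map_comp]
    refine ((Splits.X_sub_C _).map _).mul ?_
    rw [Polynomial.map_sub, Polynomial.map_X, Polynomial.map_C]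
    exact hgsplits.comp_X_sub_C _
  refine ⟨hs1, ?_⟩
  -- part 2
  set k : IntermediateField F K := F⟮t⟯ with hk
  letI : Algebra k L := ((algebraMap K L).comp (algebraMap k K)).toAlgebra
  set tk : k := ⟨t, IntermediateField.mem_adjoin_simple_self F t⟩ with htk
  set fk : Polynomial k := X ^ q + X ^ 2 - C tk with hfk
  have halgmap : (algebraMap k L) = (algebraMap K L).comp (algebraMap k K) := rfl
  have hmap : fk.map (algebraMap k L)
      = (X ^ q + X ^ 2 - C t : K[X]).map (algebraMap K L) := by
    rw [halgmap, ← Polynomial.map_map]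
    congr 1
    rw [hfk]
    simp only [Polynomial.map_sub, Polynomial.map_add, Polynomial.map_pow, Polynomial.map_X,
      Polynomial.map_C]
    rfl
  -- fk is monic, hence nonzero
  have hmonic : fk.Monic := by
    have he : fk = X ^ q + (X ^ 2 - C tk) := by rw [hfk, add_sub_assoc]
    rw [he]
    apply monic_X_pow_add
    calc (X ^ 2 - C tk : Polynomial k).degree ≤ max (X ^ 2 : Polynomial k).degree (C tk).degree :=
          degree_sub_le _ _
      _ ≤ 2 := by
          simp only [degree_X_pow]
          exact max_le le_rfl (degree_C_le.trans (by norm_num))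
      _ < q := by exact_mod_cast (by omega : 2 < q)
  have hfk_ne : fk ≠ 0 := hmonic.ne_zero
  have hfkmap_ne : fk.map (algebraMap k L) ≠ 0 := (hmonic.map _).ne_zero
  set xL : L := algebraMap K L RatFunc.X with hxL
  -- roots of fk in L
  have haev : ∀ z : L, (aeval z) fk
      = eval z ((X ^ q + X ^ 2 - C t : K[X]).map (algebraMap K L)) := by
    intro z
    rw [aeval_def, ← eval_map, hmap]
  have hxroot : xL ∈ fk.rootSet L := by
    rw [mem_rootSet']
    refine ⟨hfkmap_ne, ?_⟩
    rw [haev]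
    simp [ht, hxL, ← map_pow, ← map_add]
  have hyroot : ∀ y ∈ g.rootSet L, xL + y ∈ fk.rootSet L := by
    intro y hy
    have hgy : eval y (g.map (algebraMap K L)) = 0 := by
      have := (mem_rootSet'.mp hy).2
      rwa [aeval_def, ← eval_map] at this
    rw [mem_rootSet']
    refine ⟨hfkmap_ne, ?_⟩
    rw [haev, key, Polynomial.map_mul, eval_mul, Polynomial.map_comp, eval_comp]
    have h1 : eval (xL + y) ((X - C RatFunc.X : K[X]).map (algebraMap K L)) = y := by
      simp [hxL]
    rw [h1, hgy, mul_zero]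
  -- adjoin rootSet = ⊤
  have hadj : Algebra.adjoin k (fk.rootSet L) = ⊤ := by
    have halgroots : ∀ z ∈ fk.rootSet L, IsAlgebraic k z :=
      fun z hz => isAlgebraic_of_mem_rootSet hz
    rw [← IntermediateField.adjoin_toSubalgebra_of_isAlgebraic halgroots]
    suffices h : IntermediateField.adjoin k (fk.rootSet L) = ⊤ by
      rw [h]; rfl
    set A := IntermediateField.adjoin k (fk.rootSet L) with hA
    rw [eq_top_iff]
    rintro z -
    have hxA : xL ∈ A := IntermediateField.subset_adjoin _ _ hxroot
    have hz : z ∈ Algebra.adjoin K (g.rootSet L) := by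
      rw [Polynomial.SplittingField.adjoin_rootSet]; trivial
    have hCmem : ∀ b : F, algebraMap K L (algebraMap F K b) ∈ A := by
      intro b
      have hmem : algebraMap F K b ∈ k := k.algebraMap_mem b
      have : algebraMap K L (algebraMap F K b)
          = algebraMap k L (⟨algebraMap F K b, hmem⟩ : k) := rfl
      rw [this]
      exact A.algebraMap_mem _
    have hpoly : ∀ pol : Polynomial F,
        algebraMap K L (algebraMap (Polynomial F) K pol) ∈ A := by
      intro pol
      induction pol using Polynomial.induction_on with
      | C b =>
          have : algebraMap (Polynomial F) K (Polynomial.C b) = algebraMap F K b := by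
            rw [← Polynomial.algebraMap_eq, ← IsScalarTower.algebraMap_apply]
          rw [this]; exact hCmem b
      | add r s hr hs =>
          rw [map_add, map_add]; exact add_mem hr hs
      | monomial n b _ =>
          rw [map_mul, map_mul, map_pow, map_pow]
          refine mul_mem ?_ (pow_mem ?_ _)
          · have : algebraMap (Polynomial F) K (Polynomial.C b) = algebraMap F K b := by
              rw [← Polynomial.algebraMap_eq, ← IsScalarTower.algebraMap_apply]
            rw [this]; exact hCmem b
          · rw [RatFunc.algebraMap_X]; exact hxA
    refine Algebra.adjoin_induction ?_ ?_ ?_ ?_ hz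
    · intro y hy
      have h1 : xL + y ∈ A := IntermediateField.subset_adjoin _ _ (hyroot y hy)
      simpa using sub_mem h1 hxA
    · intro c
      rw [← RatFunc.num_div_denom c, map_div₀]
      exact div_mem (hpoly _) (hpoly _)
    · intro u v _ _ hu hv; exact add_mem hu hv
    · intro u v _ _ hu hv; exact mul_mem hu hv
  -- splits from k
  have hsplits : (fk.map (algebraMap k L)).Splits := by
    rw [hmap]
    exact hs1
  exact ⟨hsplits, hadj⟩
end
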